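/- Let F be an infinite family of closed convex sets in ℝ^d such that every d+1 members have a common point but ⋂ F = ∅. Then there exists a unit vector v such that for every A ∈ F and every a ∈ A, the ray {a + t·v : t ≥ 0} is contained in A. -/

import Mathlib

open Set Metric

section Aux

variable {E : Type*} [NormedAddCommGroup E] [NormedSpace ℝ E]

/-- A point on the segment from `x` towards `y`. -/
lemma aux_seg_mem {A : Set E} (hA : Convex ℝ A) {x y : E} (hx : x ∈ A) (hy : y ∈ A)
    {l : ℝ} (h0 : 0 ≤ l) (h1 : l ≤ 1) : x + l • (y - x) ∈ A := by
  have h := hA hx hy (by linarith : (0:ℝ) ≤ 1 - l) h0 (by ring)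
  convert h using 1
  module

/-- An unbounded closed convex set has a recession direction at any of its points. -/
lemma aux_exists_recession [ProperSpace E] {K : Set E} (hKc : IsClosed K)
    (hKv : Convex ℝ K) {a : E} (ha : a ∈ K) (hub : ¬ Bornology.IsBounded K) :
    ∃ v : E, ‖v‖ = 1 ∧ ∀ t : ℝ, 0 ≤ t → a + t • v ∈ K := by
  -- the nested compact sets of unit directions that go distance `n+1` inside `K`
  set C : ℕ → Set E := fun n =>
    Metric.sphere (0:E) 1 ∩ {v | a + ((n:ℝ) + 1) • v ∈ K} with hC
  have hCclosed : ∀ n, IsClosed (C n) := by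
    intro n
    apply (isClosed_sphere).inter
    have : ({v : E | a + ((n:ℝ) + 1) • v ∈ K}) =
        (fun v : E => a + ((n:ℝ) + 1) • v) ⁻¹' K := rfl
    rw [this]
    exact hKc.preimage (by fun_prop)
  have hCnonempty : ∀ n, (C n).Nonempty := by
    intro n
    have hn1 : (0:ℝ) < (n:ℝ) + 1 := by positivity
    -- find a point of K far away from a
    have : ¬ K ⊆ Metric.closedBall a ((n:ℝ) + 1) := by
      intro h
      exact hub (Bornology.IsBounded.subset (Metric.isBounded_closedBall) h)
    obtain ⟨x, hxK, hxfar⟩ := not_subset.mp this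
    rw [Metric.mem_closedBall, not_le, dist_eq_norm] at hxfar
    have hxa : (0:ℝ) < ‖x - a‖ := lt_trans hn1 hxfar
    refine ⟨‖x - a‖⁻¹ • (x - a), ?_, ?_⟩
    · simp [norm_smul, abs_of_nonneg (inv_nonneg.mpr hxa.le),
        inv_mul_cancel₀ (ne_of_gt hxa)]
    · have h1 : a + ((n:ℝ) + 1) • (‖x - a‖⁻¹ • (x - a))
          = a + (((n:ℝ) + 1) / ‖x - a‖) • (x - a) := by
        rw [smul_smul]; ring_nf
      rw [mem_setOf_eq, h1]
      exact aux_seg_mem hKv ha hxK (by positivity)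
        ((div_le_one hxa).mpr hxfar.le)
  have hCanti : ∀ n, C (n + 1) ⊆ C n := by
    intro n v hv
    obtain ⟨hvs, hvK⟩ := hv
    refine ⟨hvs, ?_⟩
    have h1 : a + ((n:ℝ) + 1) • v
        = a + ((((n:ℝ) + 1) / (((n:ℝ) + 1) + 1)) • (((a + (((n:ℝ)+1) + 1) • v)) - a)) := by
      rw [add_sub_cancel_left, smul_smul]
      congr 2
      field_simp
    rw [mem_setOf_eq, h1]
    have hvK' : a + (((n:ℝ)+1) + 1) • v ∈ K := by
      push_cast at hvK
      exact hvK
    exact aux_seg_mem hKv ha hvK' (by positivity)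
      (by rw [div_le_one (by positivity)]; linarith)
  have hC0 : IsCompact (C 0) :=
    (isCompact_sphere (0:E) 1).inter_right
      (hKc.preimage (by fun_prop : Continuous fun v : E => a + ((0:ℕ):ℝ) • v + v))
      |>.of_isClosed_subset (hCclosed 0) (by
        intro v hv
        exact ⟨hv.1, by simpa [add_assoc] using hv.2⟩)
  obtain ⟨v, hv⟩ := IsCompact.nonempty_iInter_of_sequence_nonempty_isCompact_isClosed
    C hCanti hCnonempty hC0 hCclosed
  have hvall : ∀ n : ℕ, v ∈ C n := fun n => mem_iInter.mp hv n
  have hvs : ‖v‖ = 1 := by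
    have := (hvall 0).1
    simpa using this
  refine ⟨v, hvs, ?_⟩
  intro t ht
  obtain ⟨n, hn⟩ := exists_nat_ge t
  have hn1 : t ≤ (n:ℝ) + 1 := by linarith
  have hK : a + ((n:ℝ) + 1) • v ∈ K := (hvall n).2
  have h1 : a + t • v = a + (t / ((n:ℝ) + 1)) • ((a + ((n:ℝ) + 1) • v) - a) := by
    rw [add_sub_cancel_left, smul_smul]
    congr 2
    field_simp
  rw [h1]
  exact aux_seg_mem hKv ha hK (by positivity)
    ((div_le_one (by positivity)).mpr hn1)

/-- Base-point independence of recession directions for closed convex sets. -/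
lemma aux_recession_of_mem {A : Set E} (hAc : IsClosed A) (hAv : Convex ℝ A)
    {a v : E} (ha : a ∈ A) (hv : ∀ t : ℝ, 0 ≤ t → a + t • v ∈ A)
    {b : E} (hb : b ∈ A) {t : ℝ} (ht : 0 ≤ t) : b + t • v ∈ A := by
  rcases eq_or_lt_of_le ht with rfl | htpos
  · simpa using hb
  -- b + t•v is the limit of points (1 - t/s)•b + (t/s)•(a + s•v) as s → ∞
  set f : ℕ → E := fun n => b + t • v + (t / (t + (n:ℝ) + 1)) • (a - b) with hf
  have hmem : ∀ n, f n ∈ A := by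
    intro n
    have hs : (0:ℝ) < t + (n:ℝ) + 1 := by positivity
    have hl0 : (0:ℝ) ≤ t / (t + (n:ℝ) + 1) := by positivity
    have hl1 : t / (t + (n:ℝ) + 1) ≤ 1 := by
      rw [div_le_one hs]; push_cast; linarith [Nat.cast_nonneg (α := ℝ) n]
    have haK : a + (t + (n:ℝ) + 1) • v ∈ A := hv _ (by positivity)
    have : b + (t / (t + (n:ℝ) + 1)) • ((a + (t + (n:ℝ) + 1) • v) - b) ∈ A :=
      aux_seg_mem hAv hb haK hl0 hl1
    convert this using 1
    rw [hf]
    simp only [smul_sub, smul_add, smul_smul]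
    rw [div_mul_cancel₀ _ (ne_of_gt (by positivity : (0:ℝ) < t + (n:ℝ) + 1))]
    module
  have htend : Filter.Tendsto f Filter.atTop (nhds (b + t • v)) := by
    have h1 : Filter.Tendsto (fun n : ℕ => t / (t + (n:ℝ) + 1)) Filter.atTop (nhds 0) := by
      apply Filter.Tendsto.div_atTop (tendsto_const_nhds)
      apply Filter.tendsto_atTop_add_const_right
      apply Filter.tendsto_atTop_add_const_left
      exact tendsto_natCast_atTop_atTop
    have h2 : Filter.Tendsto (fun n : ℕ => (t / (t + (n:ℝ) + 1)) • (a - b))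
        Filter.atTop (nhds ((0:ℝ) • (a - b))) := h1.smul_const _
    rw [zero_smul] at h2
    have := Filter.Tendsto.add (tendsto_const_nhds (x := b + t • v)) h2
    simpa using this
  exact hAc.mem_of_tendsto htend (Filter.Eventually.of_forall hmem)

end Aux

/-- If an infinite family of closed convex sets in `ℝ^d` has the `(d+1,d+1)`-property
but empty total intersection, then there is a common unit recession direction `v`:
for every member `A` and every `a ∈ A`, the ray `{a + t·v : t ≥ 0}` lies in `A`. -/
theorem common_recession_direction (d : ℕ) {ι : Type*} [Infinite ι]
    (F : ι → Set (EuclideanSpace ℝ (Fin d)))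
    (hclosed : ∀ i, IsClosed (F i)) (hconv : ∀ i, Convex ℝ (F i))
    (hhelly : ∀ s : Finset ι, s.card = d + 1 → (⋂ i ∈ s, F i).Nonempty)
    (hempty : (⋂ i, F i) = ∅) :
    ∃ v : EuclideanSpace ℝ (Fin d), ‖v‖ = 1 ∧
      ∀ i, ∀ a ∈ F i, ∀ t : ℝ, 0 ≤ t → a + t • v ∈ F i := by
  classical
  have hdim : Module.finrank ℝ (EuclideanSpace ℝ (Fin d)) = d := finrank_euclideanSpace_fin
  -- Step 1: by Helly, every finite subfamily has a common point
  have hfin : ∀ s : Finset ι, (⋂ i ∈ s, F i).Nonempty := by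
    intro s
    refine Convex.helly_theorem' (𝕜 := ℝ) (F := F) (s := s) (fun i _ => hconv i) ?_
    intro I _ hIcard
    rw [hdim] at hIcard
    obtain ⟨J, hIJ, hJcard⟩ := Infinite.exists_superset_card_eq I (d + 1) hIcard
    exact (hhelly J hJcard).mono (Set.biInter_mono hIJ (fun _ _ => Set.Subset.rfl))
  -- the set of recession directions of `F i` (without the norm condition)
  set D : ι → Set (EuclideanSpace ℝ (Fin d)) := fun i => {v | ∀ a ∈ F i, ∀ t : ℝ, 0 ≤ t → a + t • v ∈ F i} with hD
  have hDclosed : ∀ i, IsClosed (D i) := by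
    intro i
    have : D i = ⋂ a ∈ F i, ⋂ t : ℝ, ⋂ _ : 0 ≤ t, (fun v : (EuclideanSpace ℝ (Fin d)) => a + t • v) ⁻¹' F i := by
      ext v
      simp [hD, Set.mem_iInter]
    rw [this]
    exact isClosed_biInter fun a _ => isClosed_iInter fun t => isClosed_iInter fun _ =>
      (hclosed i).preimage (by fun_prop)
  -- Step 2: finite intersection property of the direction sets on the sphere
  have hFIP : ∀ u : Finset ι, (Metric.sphere (0:(EuclideanSpace ℝ (Fin d))) 1 ∩ ⋂ i ∈ u, D i).Nonempty := by
    intro u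
    obtain ⟨i0⟩ := (inferInstance : Nonempty ι)
    set s : Finset ι := insert i0 u with hs
    set K : Set (EuclideanSpace ℝ (Fin d)) := ⋂ i ∈ s, F i with hK
    have hKc : IsClosed K := isClosed_biInter fun i _ => hclosed i
    have hKv : Convex ℝ K := convex_iInter fun i => convex_iInter fun _ => hconv i
    obtain ⟨a, haK⟩ := hfin s
    -- K is unbounded
    have hub : ¬ Bornology.IsBounded K := by
      intro hb
      have hKcomp : IsCompact K := Metric.isCompact_of_isClosed_isBounded hKc hb
      have := hKcomp.inter_iInter_nonempty F hclosed (fun w => by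
        have h1 : (⋂ i ∈ (s ∪ w), F i) ⊆ K ∩ ⋂ i ∈ w, F i := by
          apply Set.subset_inter
          · exact Set.biInter_mono (Finset.subset_union_left) (fun _ _ => Set.Subset.rfl)
          · exact Set.biInter_mono (Finset.subset_union_right) (fun _ _ => Set.Subset.rfl)
        exact (hfin (s ∪ w)).mono h1)
      rw [hempty, Set.inter_empty] at this
      exact this.ne_empty rfl
    obtain ⟨v, hvnorm, hvK⟩ := aux_exists_recession hKc hKv haK hub
    refine ⟨v, by simpa using hvnorm, ?_⟩
    rw [Set.mem_iInter₂]
    intro i hiu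
    have his : i ∈ s := Finset.mem_insert_of_mem hiu
    have haFi : a ∈ F i := (Set.biInter_subset_of_mem his) haK
    have hray : ∀ t : ℝ, 0 ≤ t → a + t • v ∈ F i := fun t ht =>
      (Set.biInter_subset_of_mem his) (hvK t ht)
    intro b hb t ht
    exact aux_recession_of_mem (hclosed i) (hconv i) haFi hray hb ht
  -- Step 3: compactness of the sphere concludes
  obtain ⟨v, hvs, hvD⟩ := (isCompact_sphere (0:(EuclideanSpace ℝ (Fin d))) 1).inter_iInter_nonempty D hDclosed hFIP
  refine ⟨v, by simpa using hvs, ?_⟩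
  intro i a ha t ht
  exact (Set.mem_iInter.mp hvD i) a ha t ht
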